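/- Every line ℓ_{(a,b,c,d)} with ad − bc = 1 and a ≠ 0 and 1 + bc ≠ 0 can be reparameterized (after swapping the second and third coordinates of ℝ³) as the line through the point (a/(1+bc), −ab/(1+bc), 0) with direction (ac/(1+bc), a/(1+bc), 1); in particular its new parameters (a', b', c', d') satisfy a' = d' = a/(1+bc). -/

import Mathlib

/-- Every SL₂-line ℓ_{(a,b,c,d)} with ad − bc = 1, a ≠ 0, 1+bc ≠ 0 can, after swapping
the second and third coordinates, be reparameterized as the line through
(a/(1+bc), −ab/(1+bc), 0) with direction (ac/(1+bc), a/(1+bc), 1); in particular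
the new parameters satisfy a' = d' = a/(1+bc). -/
theorem stmt4 (a b c d : ℝ) (ha : a ≠ 0) (hbc : 1 + b*c ≠ 0) (h : a*d - b*c = 1) :
    (fun x : Fin 3 → ℝ => ![x 0, x 2, x 1]) ''
        (Set.range fun t : ℝ => (![a + c*t, b + d*t, t] : Fin 3 → ℝ)) =
      Set.range (fun s : ℝ =>
        (![a/(1+b*c), -(a*b)/(1+b*c), 0] : Fin 3 → ℝ) +
          s • (![a*c/(1+b*c), a/(1+b*c), 1] : Fin 3 → ℝ)) := by
  have had : a * d = 1 + b * c := by linarith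
  have hd : d ≠ 0 := by
    intro h0
    apply hbc
    rw [← had, h0, mul_zero]
  have hdval : d = (1+b*c)/a := by field_simp; linarith
  subst hdval
  ext x
  simp only [Set.mem_image, Set.mem_range, exists_exists_eq_and]
  constructor
  · rintro ⟨t, rfl⟩
    refine ⟨b + (1+b*c)/a * t, ?_⟩
    funext i
    fin_cases i <;>
      simp [Matrix.cons_val_zero, Matrix.cons_val_one] <;>
      field_simp <;> ring
  · rintro ⟨s, rfl⟩
    refine ⟨(s - b) * a / (1+b*c), ?_⟩
    funext i
    have hcb : 1 + c * b ≠ 0 := by rwa [mul_comm]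
    fin_cases i <;>
      simp [Matrix.cons_val_zero, Matrix.cons_val_one] <;>
      field_simp <;> ring
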